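/- Let f : ℝ^d → ℝ be C⁴ with a local minimum at x*. Let F = {v ∈ ℝ^d : ∇²f(x*)·v = 0} and E its orthogonal complement. Then for all h ∈ ℝ^d, (1/t)[f(x* + t^{1/2} p_E(h) + t^{1/4} p_F(h)) − f(x*)] converges as t → 0⁺ to (1/2)∇²f(x*)·p_E(h)^{⊗2} + (1/2)∇³f(x*)·p_E(h) ⊗ p_F(h)^{⊗2} + (1/4!)∇⁴f(x*)·p_F(h)^{⊗4}. -/

import Mathlib

open Topology Filter Asymptotics intervalIntegral

universe u

theorem taylor_peano {E : Type u} [NormedAddCommGroup E] [NormedSpace ℝ E] :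
    ∀ (n : ℕ) {F : Type u} [NormedAddCommGroup F] [NormedSpace ℝ F] [CompleteSpace F]
    (f : E → F), ContDiff ℝ n f → ∀ x : E,
    (fun v => f (x + v) - ∑ k ∈ Finset.range (n+1),
        ((k.factorial : ℝ))⁻¹ • iteratedFDeriv ℝ k f x (fun _ => v))
      =o[𝓝 (0:E)] (fun v => ‖v‖ ^ n) := by
  intro n
  induction n with
  | zero =>
    intro F _ _ _ f hf x
    have h2 : Tendsto (fun v : E => x + v) (𝓝 0) (𝓝 x) := by
      simpa using (continuous_add_left x).tendsto (0 : E)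
    have h : Tendsto (fun v => f (x + v) - f x) (𝓝 (0:E)) (𝓝 0) := by
      have h3 := (hf.continuous.tendsto x).comp h2
      have h4 := h3.sub (tendsto_const_nhds : Tendsto (fun _ : E => f x) (𝓝 0) (𝓝 (f x)))
      simpa using h4
    refine ((isLittleO_one_iff ℝ).2 h).congr' ?_ ?_
    · filter_upwards with v
      simp
    · filter_upwards with v
      simp
  | succ n ih =>
    intro F _ _ _ f hf x
    set g := fderiv ℝ f with hgdef
    have hg : ContDiff ℝ n g := hf.fderiv_right (by exact_mod_cast le_rfl)
    have IH := ih g hg x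
    set Rg : E → (E →L[ℝ] F) := fun u => g (x + u) - ∑ k ∈ Finset.range (n+1),
        ((k.factorial : ℝ))⁻¹ • iteratedFDeriv ℝ k g x (fun _ => u) with hRg
    have hsmul : ∀ (k : ℕ) (s : ℝ) (v : E),
        iteratedFDeriv ℝ k g x (fun _ => s • v) = s ^ k • iteratedFDeriv ℝ k g x (fun _ => v) := by
      intro k s v
      have := (iteratedFDeriv ℝ k g x).map_smul_univ (fun _ => s) (fun _ => v)
      simpa using this
    have hdiff : Differentiable ℝ f := hf.differentiable (by norm_num)
    have hA : ∀ v : E, ∫ s in (0:ℝ)..1, (g (x + s • v)) v = f (x + v) - f x := by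
      intro v
      have h0 : ∀ s ∈ Set.uIcc (0:ℝ) 1,
          HasDerivAt (fun s : ℝ => f (x + s • v)) ((g (x + s • v)) v) s := by
        intro s _
        have h1 : HasDerivAt (fun s : ℝ => x + s • v) v s := by
          simpa using ((hasDerivAt_id s).smul_const v).const_add x
        exact ((hdiff (x + s • v)).hasFDerivAt).comp_hasDerivAt s h1
      have hcont : Continuous fun s : ℝ => (g (x + s • v)) v := by
        have : Continuous fun s : ℝ => g (x + s • v) :=
          hg.continuous.comp (continuous_const.add (continuous_id.smul continuous_const))
        exact this.clm_apply continuous_const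
      have := integral_eq_sub_of_hasDerivAt h0 (hcont.intervalIntegrable _ _)
      simpa using this
    have key : ∀ v : E,
        f (x + v) - ∑ k ∈ Finset.range (n+2),
            ((k.factorial : ℝ))⁻¹ • iteratedFDeriv ℝ k f x (fun _ => v)
          = ∫ s in (0:ℝ)..1, (Rg (s • v)) v := by
      intro v
      have hpt : ∀ s : ℝ, (Rg (s • v)) v
          = (g (x + s • v)) v - ∑ k ∈ Finset.range (n+1),
              (((k.factorial : ℝ))⁻¹ * s ^ k) • (iteratedFDeriv ℝ k g x (fun _ => v) v) := by
        intro s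
        simp only [hRg, ContinuousLinearMap.sub_apply, ContinuousLinearMap.sum_apply,
          ContinuousLinearMap.smul_apply, hsmul, mul_smul]
      have hint1 : IntervalIntegrable (fun s : ℝ => (g (x + s • v)) v) MeasureTheory.volume 0 1 := by
        have : Continuous fun s : ℝ => g (x + s • v) :=
          hg.continuous.comp (continuous_const.add (continuous_id.smul continuous_const))
        exact (this.clm_apply continuous_const).intervalIntegrable _ _
      have hint2 : ∀ k ∈ Finset.range (n+1), IntervalIntegrable
          (fun s : ℝ => (((k.factorial : ℝ))⁻¹ * s ^ k) • (iteratedFDeriv ℝ k g x (fun _ => v) v))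
          MeasureTheory.volume 0 1 := by
        intro k _
        exact ((continuous_const.mul (continuous_pow k)).smul continuous_const).intervalIntegrable _ _
      have hint2' : IntervalIntegrable
          (fun s : ℝ => ∑ k ∈ Finset.range (n+1),
            (((k.factorial : ℝ))⁻¹ * s ^ k) • (iteratedFDeriv ℝ k g x (fun _ => v) v))
          MeasureTheory.volume 0 1 := by
        have h5 := IntervalIntegrable.sum (μ := MeasureTheory.volume) (a := (0:ℝ)) (b := 1)
          (Finset.range (n+1)) hint2
        have h6 : (∑ k ∈ Finset.range (n+1), fun s : ℝ =>
            (((k.factorial : ℝ))⁻¹ * s ^ k) • (iteratedFDeriv ℝ k g x (fun _ => v) v))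
            = fun s : ℝ => ∑ k ∈ Finset.range (n+1),
              (((k.factorial : ℝ))⁻¹ * s ^ k) • (iteratedFDeriv ℝ k g x (fun _ => v) v) := by
          funext s
          simp
        rwa [h6] at h5
      have hsplit : ∫ s in (0:ℝ)..1, (Rg (s • v)) v
          = (∫ s in (0:ℝ)..1, (g (x + s • v)) v)
            - ∑ k ∈ Finset.range (n+1), ∫ s in (0:ℝ)..1,
                (((k.factorial : ℝ))⁻¹ * s ^ k) • (iteratedFDeriv ℝ k g x (fun _ => v) v) := by
        rw [show (fun s : ℝ => (Rg (s • v)) v) = fun s : ℝ =>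
            (g (x + s • v)) v - ∑ k ∈ Finset.range (n+1),
              (((k.factorial : ℝ))⁻¹ * s ^ k) • (iteratedFDeriv ℝ k g x (fun _ => v) v)
          from funext hpt]
        rw [integral_sub hint1 hint2', integral_finset_sum hint2]
      have hBk : ∀ k : ℕ, (∫ s in (0:ℝ)..1,
          (((k.factorial : ℝ))⁻¹ * s ^ k) • (iteratedFDeriv ℝ k g x (fun _ => v) v))
          = ((k+1).factorial : ℝ)⁻¹ • iteratedFDeriv ℝ (k+1) f x (fun _ => v) := by
        intro k
        rw [intervalIntegral.integral_smul_const, intervalIntegral.integral_const_mul, integral_pow]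
        have hsar : iteratedFDeriv ℝ k g x (fun _ => v) v
            = iteratedFDeriv ℝ (k+1) f x (fun _ => v) := by
          rw [iteratedFDeriv_succ_apply_right]
          rfl
        rw [hsar]
        congr 1
        rw [Nat.factorial_succ]
        push_cast
        rw [mul_inv]
        ring
      rw [hsplit, hA, Finset.sum_range_succ']
      simp only [hBk]
      simp [sub_sub, add_comm]
    rw [isLittleO_iff]
    intro ε hε
    have hIH := isLittleO_iff.mp IH hε
    rcases Metric.eventually_nhds_iff.mp hIH with ⟨δ, hδpos, hδ⟩
    filter_upwards [Metric.ball_mem_nhds (0:E) hδpos] with v hv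
    rw [key v]
    have hvδ : ‖v‖ < δ := by simpa [dist_eq_norm] using hv
    have hbound : ∀ s ∈ Set.uIoc (0:ℝ) 1, ‖(Rg (s • v)) v‖ ≤ (ε * ‖v‖ ^ n) * ‖v‖ := by
      intro s hs
      rw [Set.uIoc_of_le zero_le_one] at hs
      have hs1 : |s| ≤ 1 := by
        rw [abs_le]
        constructor <;> [linarith [hs.1]; exact hs.2]
      have hsv : ‖s • v‖ ≤ ‖v‖ := by
        rw [norm_smul]
        calc ‖s‖ * ‖v‖ ≤ 1 * ‖v‖ := by
              apply mul_le_mul_of_nonneg_right _ (norm_nonneg v)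
              simpa using hs1
          _ = ‖v‖ := one_mul _
      have h1 : ‖Rg (s • v)‖ ≤ ε * ‖s • v‖ ^ n := by
        have := hδ (y := s • v) (by
          rw [dist_zero_right]
          exact lt_of_le_of_lt hsv hvδ)
        rwa [Real.norm_of_nonneg (pow_nonneg (norm_nonneg _) n)] at this
      calc ‖(Rg (s • v)) v‖ ≤ ‖Rg (s • v)‖ * ‖v‖ := (Rg (s • v)).le_opNorm v
        _ ≤ (ε * ‖s • v‖ ^ n) * ‖v‖ :=
            mul_le_mul_of_nonneg_right h1 (norm_nonneg v)
        _ ≤ (ε * ‖v‖ ^ n) * ‖v‖ := by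
            have := pow_le_pow_left₀ (norm_nonneg _) hsv n
            have h2 : ε * ‖s • v‖ ^ n ≤ ε * ‖v‖ ^ n :=
              mul_le_mul_of_nonneg_left this (le_of_lt hε)
            exact mul_le_mul_of_nonneg_right h2 (norm_nonneg v)
    have hnorm := intervalIntegral.norm_integral_le_of_norm_le_const hbound
    calc ‖∫ s in (0:ℝ)..1, (Rg (s • v)) v‖ ≤ (ε * ‖v‖ ^ n) * ‖v‖ * |1 - 0| := hnorm
      _ = ε * ‖v‖ ^ (n+1) := by
          rw [pow_succ]
          simp [mul_assoc]
      _ = ε * ‖‖v‖ ^ (n+1)‖ := by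
          rw [Real.norm_of_nonneg (pow_nonneg (norm_nonneg _) _)]

set_option maxHeartbeats 2000000 in
/-- Fourth-order nested expansion: with F = ker ∇²f(x*) and E = Fᗮ,
(1/t)[f(x* + t^{1/2} p_E(h) + t^{1/4} p_F(h)) − f(x*)] →
(1/2)∇²f·p_E(h)^{⊗2} + (1/2)∇³f·p_E(h)⊗p_F(h)^{⊗2} + (1/4!)∇⁴f·p_F(h)^{⊗4}. -/
theorem stmt8 (d : ℕ) (f : EuclideanSpace ℝ (Fin d) → ℝ) (x : EuclideanSpace ℝ (Fin d))
    (hf : ContDiff ℝ 4 f) (hmin : IsLocalMin f x)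
    (F : Submodule ℝ (EuclideanSpace ℝ (Fin d)))
    (hF : ∀ v, v ∈ F ↔ ∀ w : EuclideanSpace ℝ (Fin d), iteratedFDeriv ℝ 2 f x ![v, w] = 0)
    (h : EuclideanSpace ℝ (Fin d)) :
    Tendsto (fun t : ℝ =>
        (f (x + t ^ ((1:ℝ) / 2) • (Fᗮ.orthogonalProjectionOnto h : EuclideanSpace ℝ (Fin d))
            + t ^ ((1:ℝ) / 4) • (F.orthogonalProjectionOnto h : EuclideanSpace ℝ (Fin d))) - f x) / t)
      (𝓝[>] 0)
      (𝓝 ((1 / 2) * iteratedFDeriv ℝ 2 f x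
            ![(Fᗮ.orthogonalProjectionOnto h : EuclideanSpace ℝ (Fin d)),
              (Fᗮ.orthogonalProjectionOnto h : EuclideanSpace ℝ (Fin d))]
        + (1 / 2) * iteratedFDeriv ℝ 3 f x
            ![(Fᗮ.orthogonalProjectionOnto h : EuclideanSpace ℝ (Fin d)),
              (F.orthogonalProjectionOnto h : EuclideanSpace ℝ (Fin d)),
              (F.orthogonalProjectionOnto h : EuclideanSpace ℝ (Fin d))]
        + (1 / (Nat.factorial 4) : ℝ) * iteratedFDeriv ℝ 4 f x
            (fun _ => (F.orthogonalProjectionOnto h : EuclideanSpace ℝ (Fin d))))) := by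
  classical
  set a : EuclideanSpace ℝ (Fin d) := (Fᗮ.orthogonalProjectionOnto h : EuclideanSpace ℝ (Fin d)) with hadef
  set b : EuclideanSpace ℝ (Fin d) := (F.orthogonalProjectionOnto h : EuclideanSpace ℝ (Fin d)) with hbdef
  set B := fderiv ℝ (fderiv ℝ f) x with hBdef
  set C := fderiv ℝ (fderiv ℝ (fderiv ℝ f)) x with hCdef
  set Q := fderiv ℝ (fderiv ℝ (fderiv ℝ (fderiv ℝ f))) x with hQdef
  have hT2 : ∀ m : Fin 2 → EuclideanSpace ℝ (Fin d),
      iteratedFDeriv ℝ 2 f x m = B (m 0) (m 1) := fun m => iteratedFDeriv_two_apply f x m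
  have hT3 : ∀ m : Fin 3 → EuclideanSpace ℝ (Fin d),
      iteratedFDeriv ℝ 3 f x m = C (m 0) (m 1) (m 2) := by
    intro m
    have h1 := iteratedFDeriv_succ_apply_right (𝕜 := ℝ) (n := 2) (f := f) (x := x) m
    rw [h1, iteratedFDeriv_two_apply]
    rfl
  have hT4 : ∀ m : Fin 4 → EuclideanSpace ℝ (Fin d),
      iteratedFDeriv ℝ 4 f x m = Q (m 0) (m 1) (m 2) (m 3) := by
    intro m
    have h1 := iteratedFDeriv_succ_apply_right (𝕜 := ℝ) (n := 3) (f := f) (x := x) m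
    rw [h1]
    have h2 := iteratedFDeriv_succ_apply_right (𝕜 := ℝ) (n := 2) (f := fderiv ℝ f) (x := x)
      (Fin.init m)
    rw [h2, iteratedFDeriv_two_apply]
    rfl
  have hD1 : fderiv ℝ f x = 0 := hmin.fderiv_eq_zero
  have hsym2 : ∀ u w : EuclideanSpace ℝ (Fin d), B u w = B w u := fun u w =>
    ((hf.contDiffAt (x := x)).isSymmSndFDerivAt (by norm_num)).eq u w
  have hBb : B b = 0 := by
    ext w
    have hmem : b ∈ F := SetLike.coe_mem _
    have := (hF b).mp hmem w
    rw [hT2 ![b, w]] at this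
    simpa using this
  have hBab : B a b = 0 := by
    rw [hsym2 a b, hBb]
    simp
  have hC12 : ∀ u v w : EuclideanSpace ℝ (Fin d), C u v w = C v u w := by
    intro u v w
    have hg : ContDiff ℝ 3 (fderiv ℝ f) := hf.fderiv_right (by norm_num)
    have hsym := ((hg.contDiffAt (x := x)).isSymmSndFDerivAt (by norm_num)).eq u v
    exact congrArg (fun M => M w) hsym
  have hC23 : ∀ u v w : EuclideanSpace ℝ (Fin d), C u v w = C u w v := by
    intro u v w
    set B' : EuclideanSpace ℝ (Fin d) → (EuclideanSpace ℝ (Fin d) →L[ℝ]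
      EuclideanSpace ℝ (Fin d) →L[ℝ] ℝ) := fderiv ℝ (fderiv ℝ f) with hB'def
    have hB'2 : ContDiff ℝ 2 B' :=
      (hf.fderiv_right (m := 3) (by norm_num)).fderiv_right (m := 2) (by norm_num)
    have hB'd : DifferentiableAt ℝ B' x := (hB'2.differentiable (by norm_num)).differentiableAt
    have keyf : ∀ p q : EuclideanSpace ℝ (Fin d), fderiv ℝ (fun y => B' y p q) x
        = ((fderiv ℝ B' x).flip p).flip q := by
      intro p q
      have hc : DifferentiableAt ℝ (fun y => B' y p) x :=
        hB'd.clm_apply (differentiableAt_const p)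
      have h1 : fderiv ℝ (fun y => B' y p) x = (fderiv ℝ B' x).flip p := by
        rw [fderiv_clm_apply hB'd (differentiableAt_const p)]
        simp
      have h2 : fderiv ℝ (fun y => B' y p q) x = (fderiv ℝ (fun y => B' y p) x).flip q := by
        rw [fderiv_clm_apply hc (differentiableAt_const q)]
        simp
      rw [h2, h1]
    have hpt : (fun y => B' y v w) = (fun y => B' y w v) := by
      funext y
      exact ((hf.contDiffAt (x := y)).isSymmSndFDerivAt (by norm_num)).eq v w
    have hm := congrArg (fun M => M u)
      ((keyf v w).symm.trans ((congrArg (fderiv ℝ · x) hpt).trans (keyf w v)))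
    simpa using hm
  -- cubic term along b vanishes
  have hCbbb : C b b b = 0 := by
    have hf3 : ContDiff ℝ (3:ℕ) f := hf.of_le (by norm_num)
    have hP3 := taylor_peano 3 f hf3 x
    have htb : Tendsto (fun s : ℝ => s • b) (𝓝 (0:ℝ)) (𝓝 0) := by
      have hc : Continuous fun s : ℝ => s • b := continuous_id.smul continuous_const
      simpa using hc.tendsto (0:ℝ)
    have hcomp3 := hP3.comp_tendsto htb
    have hfun : ∀ s : ℝ, (f (x + s • b) - ∑ k ∈ Finset.range (3+1),
        ((k.factorial:ℝ))⁻¹ • iteratedFDeriv ℝ k f x (fun _ => s • b))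
        = f (x + s • b) - f x - (6⁻¹ * s^3) * C b b b := by
      intro s
      rw [Finset.sum_range_succ, Finset.sum_range_succ, Finset.sum_range_succ,
        Finset.sum_range_one]
      rw [hT2 (fun _ => s • b), hT3 (fun _ => s • b)]
      simp only [iteratedFDeriv_zero_apply, iteratedFDeriv_one_apply, hD1,
        ContinuousLinearMap.zero_apply, map_smul, ContinuousLinearMap.smul_apply, hBb,
        smul_eq_mul, Nat.factorial]
      ring
    have hO : (fun s : ℝ => ‖s • b‖^3) =O[𝓝 (0:ℝ)] (fun s => s^3) := by
      rw [isBigO_iff]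
      refine ⟨‖b‖^3, ?_⟩
      filter_upwards with s
      rw [norm_smul, mul_pow, Real.norm_of_nonneg (by positivity)]
      rw [Real.norm_eq_abs (s^3), abs_pow]
      rw [Real.norm_eq_abs s]
      ring_nf
      nlinarith [abs_nonneg s, norm_nonneg b, pow_nonneg (abs_nonneg s) 3,
        pow_nonneg (norm_nonneg b) 3]
    have hlit : (fun s : ℝ => f (x + s • b) - f x - (6⁻¹ * s^3) * C b b b)
        =o[𝓝 (0:ℝ)] (fun s => s^3) := by
      refine (hcomp3.congr' ?_ EventuallyEq.rfl).trans_isBigO hO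
      filter_upwards with s
      exact hfun s
    have hdiv := hlit.tendsto_div_nhds_zero
    have hq : ∀ (l : Filter ℝ), l ≤ 𝓝 0 → (∀ᶠ s in l, s ≠ 0) →
        Tendsto (fun s : ℝ => (f (x + s • b) - f x)/s^3) l (𝓝 (6⁻¹ * C b b b)) := by
      intro l hl hne
      have h1 := (hdiv.mono_left hl).add
        (tendsto_const_nhds : Tendsto (fun _ : ℝ => 6⁻¹ * C b b b) l (𝓝 (6⁻¹ * C b b b)))
      rw [zero_add] at h1
      refine h1.congr' ?_
      filter_upwards [hne] with s hs
      field_simp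
      ring
    have hev : ∀ᶠ s in 𝓝 (0:ℝ), f x ≤ f (x + s • b) := by
      have hc : Tendsto (fun s : ℝ => x + s • b) (𝓝 0) (𝓝 x) := by
        have hc2 : Continuous fun s : ℝ => x + s • b :=
          continuous_const.add (continuous_id.smul continuous_const)
        have := hc2.tendsto (0:ℝ)
        simpa using this
      have hmin' : ∀ᶠ y in 𝓝 x, f x ≤ f y := hmin
      exact hc.eventually hmin'
    have hge : 0 ≤ 6⁻¹ * C b b b := by
      refine ge_of_tendsto (hq (𝓝[>] 0) nhdsWithin_le_nhds ?_) ?_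
      · filter_upwards [self_mem_nhdsWithin] with s hs
        exact ne_of_gt hs
      · filter_upwards [self_mem_nhdsWithin, (nhdsWithin_le_nhds : 𝓝[>] (0:ℝ) ≤ 𝓝 0) hev]
          with s hs hfs
        have hs' : (0:ℝ) < s := hs
        exact div_nonneg (sub_nonneg.2 hfs) (by positivity)
    have hle : 6⁻¹ * C b b b ≤ 0 := by
      refine le_of_tendsto (hq (𝓝[<] 0) nhdsWithin_le_nhds ?_) ?_
      · filter_upwards [self_mem_nhdsWithin] with s hs
        exact ne_of_lt hs
      · filter_upwards [self_mem_nhdsWithin, (nhdsWithin_le_nhds : 𝓝[<] (0:ℝ) ≤ 𝓝 0) hev]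
          with s hs hfs
        have hs3 : s^3 ≤ 0 := by
          have : s^3 < 0 := by
            have hs0 : s < 0 := hs
            exact Odd.pow_neg (⟨1, by norm_num⟩ : Odd 3) hs0
          linarith
        exact div_nonpos_of_nonneg_of_nonpos (sub_nonneg.2 hfs) hs3
    linarith
  -- constants
  set c0 : ℝ := (1/2) * B a a + (1/2) * C a b b + (1/24) * Q b b b b with hc0def
  set A1 : ℝ := 6⁻¹*(C a a b + C a b a + C b a a)
    + 24⁻¹*(Q a b b b + Q b a b b + Q b b a b + Q b b b a) with hA1def
  set A2 : ℝ := 6⁻¹*(C a a a)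
    + 24⁻¹*(Q a a b b + Q a b a b + Q a b b a + Q b a a b + Q b a b a + Q b b a a) with hA2def
  set A3 : ℝ := 24⁻¹*(Q a a a b + Q a a b a + Q a b a a + Q b a a a) with hA3def
  set A4 : ℝ := 24⁻¹*(Q a a a a) with hA4def
  have hCbab : C b a b = C a b b := hC12 b a b
  have hCbba : C b b a = (C a b b) := by
    rw [hC23 b b a, hC12 b a b]
  -- polynomial identity
  have keyPoly : ∀ r : ℝ, 0 < r →
      ((∑ k ∈ Finset.range (4+1), ((k.factorial:ℝ))⁻¹ •
          iteratedFDeriv ℝ k f x (fun _ => r^2 • a + r • b)) - f x) / r^4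
        = c0 + r * A1 + r^2 * A2 + r^3 * A3 + r^4 * A4 := by
    intro r hr
    rw [Finset.sum_range_succ, Finset.sum_range_succ, Finset.sum_range_succ,
      Finset.sum_range_succ, Finset.sum_range_one]
    rw [hT2 (fun _ => r^2 • a + r • b), hT3 (fun _ => r^2 • a + r • b),
      hT4 (fun _ => r^2 • a + r • b)]
    simp only [iteratedFDeriv_zero_apply, iteratedFDeriv_one_apply, hD1,
      ContinuousLinearMap.zero_apply, map_add, map_smul, ContinuousLinearMap.add_apply,
      ContinuousLinearMap.smul_apply, hBb, hBab, hCbbb, hCbab, hCbba,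
      smul_eq_mul, Nat.factorial, hc0def, hA1def, hA2def, hA3def, hA4def]
    field_simp
    ring
  -- remainder part
  have hva : Tendsto (fun t : ℝ => t ^ ((1:ℝ)/2) • a + t ^ ((1:ℝ)/4) • b) (𝓝[>] 0) (𝓝 0) := by
    have hαt : ∀ α : ℝ, 0 < α → Tendsto (fun t : ℝ => t ^ α) (𝓝[>] (0:ℝ)) (𝓝 0) := by
      intro α hα
      have hcont := (Real.continuousAt_rpow_const 0 α (Or.inr hα.le)).tendsto
      rw [Real.zero_rpow hα.ne'] at hcont
      exact hcont.mono_left nhdsWithin_le_nhds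
    have h1 := (hαt ((1:ℝ)/2) (by norm_num)).smul_const a
    have h2 := (hαt ((1:ℝ)/4) (by norm_num)).smul_const b
    have := h1.add h2
    simpa using this
  have hP4 := taylor_peano 4 f hf x
  have hrem0 := hP4.comp_tendsto hva
  have hOB : (fun t : ℝ => ‖t ^ ((1:ℝ)/2) • a + t ^ ((1:ℝ)/4) • b‖ ^ 4) =O[𝓝[>] (0:ℝ)]
      (fun t => t) := by
    rw [isBigO_iff]
    refine ⟨(‖a‖ + ‖b‖)^4, ?_⟩
    filter_upwards [Ioo_mem_nhdsGT_of_mem (by constructor <;> norm_num :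
      (0:ℝ) ∈ Set.Ico 0 1)] with t ht
    have ht0 : (0:ℝ) < t := ht.1
    have ht1 : t ≤ 1 := le_of_lt ht.2
    have hle : t ^ ((1:ℝ)/2) ≤ t ^ ((1:ℝ)/4) :=
      Real.rpow_le_rpow_of_exponent_ge ht0 ht1 (by norm_num)
    have hp2 : (0:ℝ) ≤ t ^ ((1:ℝ)/2) := Real.rpow_nonneg ht0.le _
    have hp4 : (0:ℝ) ≤ t ^ ((1:ℝ)/4) := Real.rpow_nonneg ht0.le _
    have hnv : ‖t ^ ((1:ℝ)/2) • a + t ^ ((1:ℝ)/4) • b‖ ≤ t ^ ((1:ℝ)/4) * (‖a‖ + ‖b‖) := by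
      calc ‖t ^ ((1:ℝ)/2) • a + t ^ ((1:ℝ)/4) • b‖
          ≤ ‖t ^ ((1:ℝ)/2) • a‖ + ‖t ^ ((1:ℝ)/4) • b‖ := norm_add_le _ _
        _ = t ^ ((1:ℝ)/2) * ‖a‖ + t ^ ((1:ℝ)/4) * ‖b‖ := by
            rw [norm_smul, norm_smul, Real.norm_of_nonneg hp2, Real.norm_of_nonneg hp4]
        _ ≤ t ^ ((1:ℝ)/4) * ‖a‖ + t ^ ((1:ℝ)/4) * ‖b‖ := by
            have := mul_le_mul_of_nonneg_right hle (norm_nonneg a)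
            linarith
        _ = t ^ ((1:ℝ)/4) * (‖a‖ + ‖b‖) := by ring
    have h4 : ‖t ^ ((1:ℝ)/2) • a + t ^ ((1:ℝ)/4) • b‖ ^ 4 ≤ (t ^ ((1:ℝ)/4))^4 * (‖a‖ + ‖b‖)^4 := by
      rw [← mul_pow]
      exact pow_le_pow_left₀ (norm_nonneg _) hnv 4
    have ht4 : (t ^ ((1:ℝ)/4))^(4:ℕ) = t := by
      rw [← Real.rpow_natCast (t ^ ((1:ℝ)/4)) 4, ← Real.rpow_mul ht0.le]
      norm_num
    rw [Real.norm_of_nonneg (pow_nonneg (norm_nonneg _) 4), Real.norm_of_nonneg ht0.le]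
    rw [ht4] at h4
    calc ‖t ^ ((1:ℝ)/2) • a + t ^ ((1:ℝ)/4) • b‖ ^ 4 ≤ t * (‖a‖ + ‖b‖)^4 := h4
      _ = (‖a‖ + ‖b‖)^4 * t := by ring
  have hrem : Tendsto (fun t : ℝ =>
      (f (x + (t ^ ((1:ℝ)/2) • a + t ^ ((1:ℝ)/4) • b))
        - ∑ k ∈ Finset.range (4+1), ((k.factorial:ℝ))⁻¹ •
            iteratedFDeriv ℝ k f x (fun _ => t ^ ((1:ℝ)/2) • a + t ^ ((1:ℝ)/4) • b)) / t)
      (𝓝[>] 0) (𝓝 0) := (hrem0.trans_isBigO hOB).tendsto_div_nhds_zero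
  -- power tendsto
  have hαt : ∀ α : ℝ, 0 < α → Tendsto (fun t : ℝ => t ^ α) (𝓝[>] (0:ℝ)) (𝓝 0) := by
    intro α hα
    have hcont := (Real.continuousAt_rpow_const 0 α (Or.inr hα.le)).tendsto
    rw [Real.zero_rpow hα.ne'] at hcont
    exact hcont.mono_left nhdsWithin_le_nhds
  have hG : Tendsto (fun t : ℝ => c0 + t ^ ((1:ℝ)/4) * A1 + t ^ ((1:ℝ)/2) * A2
      + t ^ ((3:ℝ)/4) * A3 + t * A4) (𝓝[>] 0) (𝓝 c0) := by
    have h0 : Tendsto (fun _ : ℝ => c0) (𝓝[>] (0:ℝ)) (𝓝 c0) := tendsto_const_nhds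
    have h1 := (hαt ((1:ℝ)/4) (by norm_num)).mul_const A1
    have h2 := (hαt ((1:ℝ)/2) (by norm_num)).mul_const A2
    have h3 := (hαt ((3:ℝ)/4) (by norm_num)).mul_const A3
    have h4 : Tendsto (fun t : ℝ => t * A4) (𝓝[>] (0:ℝ)) (𝓝 0) := by
      have := (tendsto_id.mono_left (nhdsWithin_le_nhds : 𝓝[>] (0:ℝ) ≤ 𝓝 0)).mul_const A4
      simpa using this
    have := (((h0.add h1).add h2).add h3).add h4
    simpa using this
  -- main eventual equality
  have hmain : (fun t : ℝ =>
      (f (x + t ^ ((1:ℝ)/2) • a + t ^ ((1:ℝ)/4) • b) - f x) / t)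
      =ᶠ[𝓝[>] (0:ℝ)] (fun t : ℝ => (f (x + (t ^ ((1:ℝ)/2) • a + t ^ ((1:ℝ)/4) • b))
          - ∑ k ∈ Finset.range (4+1), ((k.factorial:ℝ))⁻¹ •
              iteratedFDeriv ℝ k f x (fun _ => t ^ ((1:ℝ)/2) • a + t ^ ((1:ℝ)/4) • b)) / t
        + (c0 + t ^ ((1:ℝ)/4) * A1 + t ^ ((1:ℝ)/2) * A2 + t ^ ((3:ℝ)/4) * A3 + t * A4)) := by
    filter_upwards [self_mem_nhdsWithin] with t ht
    have ht0 : (0:ℝ) < t := ht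
    set r : ℝ := t ^ ((1:ℝ)/4) with hrdef
    have hr0 : 0 < r := Real.rpow_pos_of_pos ht0 _
    have hs2 : t ^ ((1:ℝ)/2) = r^2 := by
      rw [hrdef, ← Real.rpow_natCast (t ^ ((1:ℝ)/4)) 2, ← Real.rpow_mul ht0.le]
      norm_num
    have hs3 : t ^ ((3:ℝ)/4) = r^3 := by
      rw [hrdef, ← Real.rpow_natCast (t ^ ((1:ℝ)/4)) 3, ← Real.rpow_mul ht0.le]
      norm_num
    have hs4 : t = r^4 := by
      rw [hrdef, ← Real.rpow_natCast (t ^ ((1:ℝ)/4)) 4, ← Real.rpow_mul ht0.le]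
      norm_num
    have hkp := keyPoly r hr0
    rw [add_assoc x, hs2, hs3]
    rw [hs4]
    rw [← hkp]
    have hrne : (r:ℝ)^4 ≠ 0 := by positivity
    field_simp
    ring
  -- final assembly
  have htot := hrem.add hG
  rw [zero_add] at htot
  have hfinal := htot.congr' hmain.symm
  have hctarget : ((1 / 2) * iteratedFDeriv ℝ 2 f x ![a, a]
        + (1 / 2) * iteratedFDeriv ℝ 3 f x ![a, b, b]
        + (1 / (Nat.factorial 4) : ℝ) * iteratedFDeriv ℝ 4 f x (fun _ => b)) = c0 := by
    rw [hT2 ![a, a], hT3 ![a, b, b], hT4 (fun _ => b)]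
    simp only [Matrix.cons_val_zero, Matrix.cons_val_one, Matrix.head_cons, hc0def,
      Nat.factorial]
    norm_num
    rfl
  rw [← hctarget] at hfinal
  exact hfinal
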